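/- arXiv:2309.17178 — 6 statements merged into one kernel-verified Lean document; each statement's English description precedes it below -/
import Mathlib

section
/- Let X be an infinite compact Hausdorff topological space and suppose the infinite dihedral group D_∞ acts on X by homeomorphisms such that the action is minimal. Then the action has the marker property: for every finite subset F ⊆ D_∞ there exists a nonempty open subset U ⊆ X such that (1) gU ∩ g'U = ∅ for any two distinct g, g' ∈ F, and (2) X = ⋃_{g ∈ D_∞} gU. -/
open Pointwise

namespace DMarkerAux

set_option linter.unusedSectionVars false

/-- Rotations in the infinite dihedral group. -/
def R (m : ℤ) : DihedralGroup 0 := DihedralGroup.r m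

/-- Reflections in the infinite dihedral group. -/
def S (m : ℤ) : DihedralGroup 0 := DihedralGroup.sr m

@[simp] lemma R_mul_R (a b : ℤ) : R a * R b = R (a + b) := rfl
@[simp] lemma R_mul_S (a b : ℤ) : R a * S b = S (b - a) := rfl
@[simp] lemma S_mul_R (a b : ℤ) : S a * R b = S (a + b) := rfl
@[simp] lemma S_mul_S (a b : ℤ) : S a * S b = R (b - a) := rfl
@[simp] lemma R_zero : R 0 = 1 := rfl
@[simp] lemma R_inv (a : ℤ) : (R a)⁻¹ = R (-a) := rfl
@[simp] lemma S_inv (a : ℤ) : (S a)⁻¹ = S a := rfl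
lemma R_inj {a b : ℤ} (h : R a = R b) : a = b := by
  exact DihedralGroup.r.inj h
lemma R_ne_one {a : ℤ} (ha : a ≠ 0) : R a ≠ 1 := by
  intro h; exact ha (R_inj (by simpa using h))
lemma cases_RS (g : DihedralGroup 0) : (∃ m : ℤ, g = R m) ∨ (∃ m : ℤ, g = S m) := by
  cases g with
  | r m => exact Or.inl ⟨m, rfl⟩
  | sr m => exact Or.inr ⟨m, rfl⟩

variable {X : Type*} [TopologicalSpace X] [CompactSpace X] [T2Space X] [Infinite X]
  [MulAction (DihedralGroup 0) X] [ContinuousConstSMul (DihedralGroup 0) X]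

/-- From minimality: every nonempty open set is met by every orbit. -/
lemma meet (hmin : ∀ x : X, Dense (MulAction.orbit (DihedralGroup 0) x))
    {U : Set X} (hU : IsOpen U) (hUne : U.Nonempty) (x : X) :
    ∃ g : DihedralGroup 0, g • x ∈ U := by
  obtain ⟨y, hyU, hyo⟩ := (hmin x).inter_open_nonempty U hU hUne
  obtain ⟨g, rfl⟩ := MulAction.mem_orbit_iff.mp hyo
  exact ⟨g, hyU⟩

lemma fix_neg {m : ℤ} {x : X} (h : R m • x = x) : R (-m) • x = x := by
  have : R (-m) • (R m • x) = x := by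
    rw [← mul_smul]; simp
  rwa [h] at this

/-- No nonzero rotation acts trivially. -/
lemma trivA (hmin : ∀ x : X, Dense (MulAction.orbit (DihedralGroup 0) x))
    (n : ℤ) (hn : n ≠ 0) (h : ∀ x : X, R n • x = x) : False := by
  set N : ℤ := (n.natAbs : ℤ) with hNdef
  have hNpos : 0 < N := by
    have := Int.natAbs_pos.mpr hn; omega
  have hNfix : ∀ x : X, R N • x = x := by
    rcases Int.natAbs_eq n with h' | h'
    · intro x; rw [show N = n from h'.symm]; exact h x
    · intro x; rw [show N = -n by omega]; exact fix_neg (h x)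
  have hq : ∀ q : ℤ, ∀ x : X, R (N * q) • x = x := by
    intro q
    induction q using Int.induction_on with
    | zero => intro x; simpa using (one_smul (DihedralGroup 0) x)
    | succ k ih =>
        intro x
        have : R (N * k) • (R N • x) = x := by rw [hNfix x]; exact ih x
        rw [← mul_smul, R_mul_R, show N * k + N = N * (k + 1) by ring] at this
        exact this
    | pred k ih =>
        intro x
        have : R (N * (-k)) • (R (-N) • x) = x := by
          rw [fix_neg (hNfix x)]; exact ih x
        rw [← mul_smul, R_mul_R, show N * (-k) + -N = N * (-k - 1) by ring] at this
        exact this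
  -- every orbit is finite
  obtain ⟨x0⟩ : Nonempty X := inferInstance
  have hsub : MulAction.orbit (DihedralGroup 0) x0 ⊆
      (fun m : ℤ => R m • x0) '' (Set.Icc 0 (N - 1)) ∪
      (fun m : ℤ => S m • x0) '' (Set.Icc 0 (N - 1)) := by
    rintro _ ⟨g, rfl⟩
    have hmem : ∀ m : ℤ, m % N ∈ Set.Icc (0:ℤ) (N - 1) := by
      intro m
      refine Set.mem_Icc.mpr ⟨Int.emod_nonneg m (by omega), by
        have := Int.emod_lt_of_pos m hNpos; omega⟩
    rcases cases_RS g with ⟨m, rfl⟩ | ⟨m, rfl⟩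
    · left
      refine ⟨m % N, hmem m, ?_⟩
      have he : R (m % N) * R (N * (m / N)) = R m := by
        rw [R_mul_R, Int.emod_add_mul_ediv]
      calc R (m % N) • x0 = R (m % N) • (R (N * (m / N)) • x0) := by rw [hq _ x0]
        _ = R m • x0 := by rw [← mul_smul, he]
    · right
      refine ⟨m % N, hmem m, ?_⟩
      have he : S (m % N) * R (N * (m / N)) = S m := by
        rw [S_mul_R, Int.emod_add_mul_ediv]
      calc S (m % N) • x0 = S (m % N) • (R (N * (m / N)) • x0) := by rw [hq _ x0]
        _ = S m • x0 := by rw [← mul_smul, he]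
  have hfin : (MulAction.orbit (DihedralGroup 0) x0).Finite :=
    Set.Finite.subset (((Set.finite_Icc _ _).image _).union ((Set.finite_Icc _ _).image _)) hsub
  have : (Set.univ : Set X) = MulAction.orbit (DihedralGroup 0) x0 := by
    rw [← (hmin x0).closure_eq, hfin.isClosed.closure_eq]
  exact Set.infinite_univ (this ▸ hfin)

/-- The fixed-point set of a nonzero rotation contains no nonempty open set. -/
lemma fixA (hmin : ∀ x : X, Dense (MulAction.orbit (DihedralGroup 0) x))
    (n : ℤ) (hn : n ≠ 0) {W : Set X} (hW : IsOpen W) (hWne : W.Nonempty)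
    (hfix : ∀ x ∈ W, R n • x = x) : False := by
  refine trivA hmin n hn (fun x => ?_)
  obtain ⟨g, hg⟩ := meet hmin hW hWne x
  have hgfix : R n • (g • x) = g • x := hfix _ hg
  rcases cases_RS g with ⟨k, rfl⟩ | ⟨k, rfl⟩
  · -- (R k)⁻¹ * R n * R k = R n
    have : ((R k)⁻¹ * R n * R k) • x = x := by
      rw [mul_smul, mul_smul, hgfix, ← mul_smul]; simp
    rw [show (R k)⁻¹ * R n * R k = R n by simp] at this
    exact this
  · have : ((S k)⁻¹ * R n * S k) • x = x := by
      rw [mul_smul, mul_smul, hgfix, ← mul_smul]; simp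
    rw [show (S k)⁻¹ * R n * S k = R (-n) by simp] at this
    have h2 := fix_neg this
    rwa [neg_neg] at h2


/-- The fixed-point set of a reflection contains no nonempty open set. -/
lemma fixB (hmin : ∀ x : X, Dense (MulAction.orbit (DihedralGroup 0) x))
    (n : ℤ) {W : Set X} (hW : IsOpen W) (hWne : W.Nonempty)
    (hfix : ∀ x ∈ W, S n • x = x) : False := by
  -- every point of `R k • W` is fixed by `S (n - 2*k)`
  have hWfix : ∀ k : ℤ, ∀ y ∈ R k • W, S (n - 2 * k) • y = y := by
    intro k y hy
    rw [Set.mem_smul_set_iff_inv_smul_mem] at hy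
    have h1 : (R k * S n * (R k)⁻¹) • y = y := by
      rw [mul_smul, mul_smul, R_inv, ← R_inv, hfix _ (by simpa using hy), smul_inv_smul]
    rw [show R k * S n * (R k)⁻¹ = S (n - 2 * k) by
      rw [R_inv, R_mul_S, S_mul_R]; exact congrArg S (by ring)] at h1
    exact h1
  -- distinct `R`-translates of `W` are disjoint
  have hdisj : ∀ k j : ℤ, ((R k • W) ∩ (R j • W)).Nonempty → k = j := by
    intro k j hne
    by_contra hkj
    refine fixA hmin (2 * (k - j)) (by omega) ((hW.smul (R k)).inter (hW.smul (R j))) hne ?_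
    rintro z ⟨hzk, hzj⟩
    have h1 := hWfix k z hzk
    have h2 := hWfix j z hzj
    have h3 : (S (n - 2 * k) * S (n - 2 * j)) • z = z := by
      rw [mul_smul, h2, h1]
    rw [show S (n - 2 * k) * S (n - 2 * j) = R (2 * (k - j)) by
      rw [S_mul_S]; exact congrArg R (by ring)] at h3
    exact h3
  -- `S n` preserves `W`, hence every translate of `W` is an `R`-translate
  have hSnW : S n • W = W := by
    ext y
    simp only [Set.mem_smul_set]
    constructor
    · rintro ⟨w, hw, rfl⟩; rwa [hfix w hw]
    · intro hy; exact ⟨y, hy, hfix y hy⟩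
  have hcover : ∀ x : X, ∃ c : ℤ, x ∈ R c • W := by
    intro x
    obtain ⟨g, hg⟩ := meet hmin hW hWne x
    have hx : x ∈ g⁻¹ • W := ⟨g • x, hg, by simp⟩
    rcases cases_RS g⁻¹ with ⟨m, hm⟩ | ⟨m, hm⟩
    · exact ⟨m, hm ▸ hx⟩
    · refine ⟨n - m, ?_⟩
      have he : S m • W = R (n - m) • W := by
        calc S m • W = (R (n - m) * S n) • W := by
              rw [R_mul_S]; exact congrArg (fun a => S a • W) (by ring)
          _ = R (n - m) • (S n • W) := by rw [mul_smul]
          _ = R (n - m) • W := by rw [hSnW]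
      rw [← he]
      exact hm ▸ hx
  -- compactness gives finitely many translates covering, contradiction
  obtain ⟨T, hT⟩ := isCompact_univ.elim_finite_subcover (fun c : ℤ => R c • W)
    (fun c => hW.smul _) (fun x _ => Set.mem_iUnion.mpr (hcover x))
  obtain ⟨w0, hw0⟩ := hWne
  obtain ⟨k, hk⟩ := Infinite.exists_notMem_finset T
  have hmem : R k • w0 ∈ ⋃ c ∈ T, R c • W := hT (Set.mem_univ _)
  simp only [Set.mem_iUnion] at hmem
  obtain ⟨c, hcT, hc⟩ := hmem
  have : k = c := hdisj k c ⟨R k • w0, Set.smul_mem_smul_set hw0, hc⟩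
  exact hk (this ▸ hcT)


/-- A finite intersection of dense open sets is dense. -/
lemma dense_biInter {α : Type*} {s : Finset α} {f : α → Set X} :
    (∀ a ∈ s, IsOpen (f a)) → (∀ a ∈ s, Dense (f a)) → Dense (⋂ a ∈ s, f a) := by
  classical
  induction s using Finset.induction_on with
  | empty => intro _ _; simpa using dense_univ
  | @insert a s _ ih =>
      intro ho hd
      rw [Finset.set_biInter_insert]
      exact (hd a (Finset.mem_insert_self a s)).inter_of_isOpen_left
        (ih (fun b hb => ho b (Finset.mem_insert_of_mem hb))
          (fun b hb => hd b (Finset.mem_insert_of_mem hb)))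
        (ho a (Finset.mem_insert_self a s))

/-- Separation: for a finite set of nontrivial group elements there is a nonempty open set
whose translates by those elements are disjoint from it. -/
lemma sep (hmin : ∀ x : X, Dense (MulAction.orbit (DihedralGroup 0) x))
    (Sf : Finset (DihedralGroup 0)) (h1 : (1 : DihedralGroup 0) ∉ Sf) :
    ∃ U : Set X, U.Nonempty ∧ IsOpen U ∧ ∀ h ∈ Sf, (h • U) ∩ U = ∅ := by
  classical
  -- each non-fixed-point set is open and dense
  have hdense : ∀ h ∈ Sf, Dense {x : X | h • x ≠ x} := by
    intro h hh
    rw [dense_iff_inter_open]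
    intro W hW hWne
    by_contra hcon
    have hfix : ∀ x ∈ W, h • x = x := by
      intro x hx
      by_contra hx'
      exact hcon ⟨x, hx, hx'⟩
    rcases cases_RS h with ⟨m, rfl⟩ | ⟨m, rfl⟩
    · have hm : m ≠ 0 := by
        intro h0
        exact h1 (by rwa [h0, R_zero] at hh)
      exact fixA hmin m hm hW hWne hfix
    · exact fixB hmin m hW hWne hfix
  have hopen : ∀ h : DihedralGroup 0, IsOpen {x : X | h • x ≠ x} := by
    intro h
    have : IsClosed {x : X | h • x = x} :=
      isClosed_eq (continuous_const_smul h) continuous_id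
    exact this.isOpen_compl
  -- finite intersection of open dense sets is dense
  have hD : Dense (⋂ h ∈ Sf, {x : X | h • x ≠ x}) :=
    dense_biInter (fun a _ => hopen a) hdense
  obtain ⟨x, hx⟩ := hD.nonempty
  simp only [Set.mem_iInter] at hx
  -- separate x from h • x for each h ∈ Sf
  have hsep : ∀ h : DihedralGroup 0, ∃ A B : Set X, IsOpen A ∧ IsOpen B ∧
      A ∩ B = ∅ ∧ (h ∈ Sf → x ∈ A ∧ h • x ∈ B) := by
    intro h
    by_cases hh : h ∈ Sf
    · obtain ⟨B, A, hBo, hAo, hmemB, hmemA, hABd⟩ := t2_separation (hx h hh)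
      exact ⟨A, B, hAo, hBo, by rw [Set.inter_comm]; exact Set.disjoint_iff_inter_eq_empty.mp hABd,
        fun _ => ⟨hmemA, hmemB⟩⟩
    · exact ⟨∅, ∅, isOpen_empty, isOpen_empty, by simp, fun hc => absurd hc hh⟩
  choose A B hAo hBo hABd hmem using hsep
  refine ⟨⋂ h ∈ Sf, (A h ∩ h⁻¹ • B h), ⟨x, ?_⟩, ?_, ?_⟩
  · simp only [Set.mem_iInter]
    intro h hh
    exact ⟨(hmem h hh).1, by
      rw [Set.mem_smul_set_iff_inv_smul_mem, inv_inv]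
      exact (hmem h hh).2⟩
  · exact isOpen_biInter_finset (fun h _ => (hAo h).inter ((hBo h).smul _))
  · intro h hh
    rw [Set.eq_empty_iff_forall_notMem]
    rintro y ⟨hy1, hy2⟩
    have hyB : y ∈ B h := by
      obtain ⟨z, hz, rfl⟩ := hy1
      have := Set.mem_iInter.mp (Set.mem_iInter.mp hz h) hh
      have h2 := this.2
      rwa [Set.mem_smul_set_iff_inv_smul_mem, inv_inv] at h2
    have hyA : y ∈ A h := (Set.mem_iInter.mp (Set.mem_iInter.mp hy2 h) hh).1
    have : y ∈ A h ∩ B h := ⟨hyA, hyB⟩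
    rw [hABd h] at this
    exact this

end DMarkerAux

/-- **Marker property for minimal actions of the infinite dihedral group.**
If the infinite dihedral group `D_∞` (realized as `DihedralGroup 0`) acts by homeomorphisms
on an infinite compact Hausdorff space `X` and the action is minimal (every orbit is dense),
then for every finite subset `F ⊆ D_∞` there is a nonempty open set `U ⊆ X` such that
`gU ∩ g'U = ∅` for all distinct `g, g' ∈ F` and `X = ⋃_{g ∈ D_∞} gU`. -/
theorem dihedral_minimal_marker_property
    {X : Type*} [TopologicalSpace X] [CompactSpace X] [T2Space X] [Infinite X]
    [MulAction (DihedralGroup 0) X] [ContinuousConstSMul (DihedralGroup 0) X]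
    (hmin : ∀ x : X, Dense (MulAction.orbit (DihedralGroup 0) x))
    (F : Finset (DihedralGroup 0)) :
    ∃ U : Set X, U.Nonempty ∧ IsOpen U ∧
      (∀ g ∈ F, ∀ g' ∈ F, g ≠ g' → (g • U) ∩ (g' • U) = ∅) ∧
      (⋃ g : DihedralGroup 0, g • U) = Set.univ := by
  classical
  set Sf : Finset (DihedralGroup 0) :=
    ((F ×ˢ F).image (fun p => p.1⁻¹ * p.2)).erase 1 with hSf
  obtain ⟨U, hUne, hUo, hUd⟩ := DMarkerAux.sep hmin Sf (Finset.notMem_erase _ _)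
  refine ⟨U, hUne, hUo, ?_, ?_⟩
  · intro g hg g' hg' hgg'
    rw [Set.eq_empty_iff_forall_notMem]
    rintro y ⟨hy1, hy2⟩
    have hmemS : g⁻¹ * g' ∈ Sf := by
      refine Finset.mem_erase.mpr ⟨?_, Finset.mem_image.mpr
        ⟨(g, g'), Finset.mem_product.mpr ⟨hg, hg'⟩, rfl⟩⟩
      rw [ne_eq, inv_mul_eq_one]
      exact hgg'
    have h2 : g'⁻¹ • y ∈ U := by
      rwa [← Set.mem_smul_set_iff_inv_smul_mem]
    have h3 : g⁻¹ • y ∈ (g⁻¹ * g') • U := by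
      have : (g⁻¹ * g') • (g'⁻¹ • y) = g⁻¹ • y := by
        rw [mul_smul, smul_inv_smul]
      exact this ▸ Set.smul_mem_smul_set h2
    have h4 : g⁻¹ • y ∈ U := by
      rwa [← Set.mem_smul_set_iff_inv_smul_mem]
    have : g⁻¹ • y ∈ ((g⁻¹ * g') • U) ∩ U := ⟨h3, h4⟩
    rw [hUd _ hmemS] at this
    exact this
  · ext x
    simp only [Set.mem_iUnion, Set.mem_univ, iff_true]
    obtain ⟨g, hg⟩ := DMarkerAux.meet hmin hUo hUne x
    exact ⟨g⁻¹, by rw [Set.mem_smul_set_iff_inv_smul_mem, inv_inv]; exact hg⟩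
end

section
/- Let the infinite dihedral group D_∞ act by homeomorphisms on an infinite compact Hausdorff topological space X such that the action is minimal. Then for every x ∈ X the intersection of the stabilizer Stab(x) with the translation subgroup ⟨s⟩ is trivial; that is, sⁿ·x ≠ x for every integer n ≠ 0. -/
open DihedralGroup

lemma r_zpow0 (k : ℤ) : (r 1 : DihedralGroup 0) ^ k = r k := by
  obtain ⟨m⟩ | ⟨m⟩ := k
  · rw [Int.ofNat_eq_coe, zpow_natCast, r_one_pow]
    rfl
  · rw [zpow_negSucc, r_one_pow]
    refine (eq_inv_of_mul_eq_one_left ?_).symm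
    refine (r_mul_r _ _).trans ?_
    rw [one_def]
    congr 1
    show ((m : ℤ) + 1) + Int.negSucc m = 0
    simp only [Int.negSucc_eq]
    ring



/-- For a minimal action of the infinite dihedral group `D_∞ = ⟨s, t ∣ t² = 1, tsts = 1⟩`
(realized as `DihedralGroup 0`, with `s = r 1`) by homeomorphisms on an infinite compact
Hausdorff space `X`, for every `x ∈ X` the intersection of the stabilizer `Stab(x)` with the
translation subgroup `⟨s⟩` is trivial; that is, `sⁿ • x ≠ x` for every integer `n ≠ 0`. -/
theorem dihedral_minimal_stabilizer_inter_translations_trivial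
    {X : Type*} [TopologicalSpace X] [CompactSpace X] [T2Space X] [Infinite X]
    [MulAction (DihedralGroup 0) X] [ContinuousConstSMul (DihedralGroup 0) X]
    (hmin : ∀ x : X, Dense (MulAction.orbit (DihedralGroup 0) x)) (x : X) :
    MulAction.stabilizer (DihedralGroup 0) x ⊓
        Subgroup.zpowers (DihedralGroup.r 1 : DihedralGroup 0) = ⊥ ∧
      ∀ n : ℤ, n ≠ 0 → ((DihedralGroup.r 1 : DihedralGroup 0) ^ n) • x ≠ x := by
  have key : ∀ n : ℤ, n ≠ 0 → ((DihedralGroup.r 1 : DihedralGroup 0) ^ n) • x ≠ x := by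
    intro n hn hfix
    set N : ℤ := (n.natAbs : ℤ) with hNdef
    have hNpos : 0 < N := by
      have := Int.natAbs_pos.mpr hn
      omega
    -- r 1 ^ N stabilizes x
    have hstab : (r 1 : DihedralGroup 0) ^ N ∈ MulAction.stabilizer (DihedralGroup 0) x := by
      rcases Int.natAbs_eq n with h | h
      · have hNn : N = n := by omega
        rw [hNn]; exact hfix
      · have : N = -n := by omega
        rw [this, zpow_neg]
        exact inv_mem hfix
    have hmul : ∀ k : ℤ, (r (N * k) : DihedralGroup 0) • x = x := by
      intro k
      have : (r (N * k) : DihedralGroup 0) = ((r 1 : DihedralGroup 0) ^ N) ^ k := by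
        rw [← zpow_mul, r_zpow0]
      rw [this]
      exact zpow_mem hstab k
    -- reduce any r i or sr i modulo N
    have hr : ∀ i : ℤ, (r i : DihedralGroup 0) • x = (r (i % N) : DihedralGroup 0) • x := by
      intro i
      have h1 : (r i : DihedralGroup 0) = r (i % N) * r (N * (i / N)) := by
        refine Eq.trans ?_ (r_mul_r _ _).symm
        exact congrArg (fun j : ℤ => (r j : DihedralGroup 0)) (Int.emod_add_mul_ediv i N).symm
      rw [h1, mul_smul, hmul]
    have hsr : ∀ i : ℤ, (sr i : DihedralGroup 0) • x = (sr (i % N) : DihedralGroup 0) • x := by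
      intro i
      have h1 : (sr i : DihedralGroup 0) = sr (i % N) * r (N * (i / N)) := by
        refine Eq.trans ?_ (sr_mul_r _ _).symm
        exact congrArg (fun j : ℤ => (sr j : DihedralGroup 0)) (Int.emod_add_mul_ediv i N).symm
      rw [h1, mul_smul, hmul]
    -- the orbit is finite
    have horb : (MulAction.orbit (DihedralGroup 0) x).Finite := by
      have hsub : MulAction.orbit (DihedralGroup 0) x ⊆
          (Set.range fun j : Fin n.natAbs => (r (j : ℤ) : DihedralGroup 0) • x) ∪
          (Set.range fun j : Fin n.natAbs => (sr (j : ℤ) : DihedralGroup 0) • x) := by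
        have hcases : ∀ g : DihedralGroup 0,
            (∃ j : ℤ, g = r j) ∨ ∃ j : ℤ, g = sr j := by
          rintro (i | i)
          · exact Or.inl ⟨i, rfl⟩
          · exact Or.inr ⟨i, rfl⟩
        rintro y ⟨g, rfl⟩
        obtain ⟨i, rfl⟩ | ⟨i, rfl⟩ := hcases g
        · left
          have hi0 : 0 ≤ i % N := Int.emod_nonneg _ (by omega)
          have hi1 : i % N < N := Int.emod_lt_of_pos _ hNpos
          refine ⟨⟨(i % N).toNat, by omega⟩, ?_⟩
          simp only
          rw [hr i]
          exact congrArg (fun j : ℤ => (r j : DihedralGroup 0) • x)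
            (by omega : (((i % N).toNat : ℕ) : ℤ) = i % N)
        · right
          have hi0 : 0 ≤ i % N := Int.emod_nonneg _ (by omega)
          have hi1 : i % N < N := Int.emod_lt_of_pos _ hNpos
          refine ⟨⟨(i % N).toNat, by omega⟩, ?_⟩
          simp only
          rw [hsr i]
          exact congrArg (fun j : ℤ => (sr j : DihedralGroup 0) • x)
            (by omega : (((i % N).toNat : ℕ) : ℤ) = i % N)
      exact Set.Finite.subset ((Set.finite_range _).union (Set.finite_range _)) hsub
    -- finite dense set in a T1 space makes X finite
    have hclosed : IsClosed (MulAction.orbit (DihedralGroup 0) x) := horb.isClosed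
    have huniv : MulAction.orbit (DihedralGroup 0) x = Set.univ := by
      have := (hmin x).closure_eq
      rw [hclosed.closure_eq] at this
      exact this
    have : (Set.univ : Set X).Finite := huniv ▸ horb
    exact Set.infinite_univ this
  refine ⟨?_, key⟩
  rw [eq_bot_iff]
  rintro g ⟨hg1, k, hk⟩
  rcases eq_or_ne k 0 with rfl | hk0
  · simp only [zpow_zero] at hk
    simp [← hk, Subgroup.mem_bot]
  · exact absurd hg1 (by rw [← hk]; exact fun h => key k hk0 h)
end

section
/- Let the infinite dihedral group D_∞ act by homeomorphisms on an infinite compact Hausdorff topological space X such that the action is minimal. Then for every x ∈ X, either Stab(x) = {e} or Stab(x) = {e, sⁿt} for some n ∈ ℤ. In particular, every stabilizer subgroup has order at most 2. -/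
open DihedralGroup

private lemma r_mul_r'' (i j : ℤ) : (r i * r j : DihedralGroup 0) = r (i + j) := r_mul_r _ _
private lemma r_mul_sr'' (i j : ℤ) : (r i * sr j : DihedralGroup 0) = sr (j - i) := r_mul_sr _ _
private lemma sr_mul_r'' (i j : ℤ) : (sr i * r j : DihedralGroup 0) = sr (i + j) := sr_mul_r _ _
private lemma sr_mul_sr'' (i j : ℤ) : (sr i * sr j : DihedralGroup 0) = r (j - i) := sr_mul_sr _ _

private lemma r_inv' (i : ℤ) : (r i : DihedralGroup 0)⁻¹ = r (-i) := by
  apply inv_eq_of_mul_eq_one_right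
  rw [r_mul_r'', add_neg_cancel, one_def]; rfl

private lemma r_one_zpow' (n : ℤ) : (r 1 : DihedralGroup 0) ^ n = r n := by
  induction n using Int.induction_on with
  | zero => rw [zpow_zero, one_def]; rfl
  | succ k ih => rw [zpow_add_one, ih]; erw [r_mul_r'']; rfl
  | pred k ih => rw [zpow_sub_one, ih]; erw [r_inv', r_mul_r'']; show (r ((-(k:ℤ) + -1 : ℤ)) : DihedralGroup 0) = r ((-(k:ℤ) - 1 : ℤ)); ring_nf

private lemma r_zpow' (i m : ℤ) : (r i : DihedralGroup 0) ^ m = r (i * m) := by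
  rw [← r_one_zpow' i, ← zpow_mul, r_one_zpow']

private lemma sr_inv' (i : ℤ) : (sr i : DihedralGroup 0)⁻¹ = sr i :=
  inv_eq_of_mul_eq_one_right (by rw [sr_mul_sr'', sub_self, one_def]; rfl)

private lemma no_rot {X : Type*} [TopologicalSpace X] [T2Space X] [Infinite X]
    [MulAction (DihedralGroup 0) X] [ContinuousConstSMul (DihedralGroup 0) X]
    (hmin : ∀ x : X, Dense (MulAction.orbit (DihedralGroup 0) x)) (x : X)
    (n : ℤ) (hn : n ≠ 0) (hfix : (r n : DihedralGroup 0) • x = x) : False := by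
  classical
  set F : Set X := {y | (r n : DihedralGroup 0) • y = y} with hF
  have hneg : ∀ y ∈ F, (r (-n) : DihedralGroup 0) • y = y := by
    intro y hy
    conv_lhs => rw [← hy]
    rw [smul_smul, r_mul_r'', neg_add_cancel]; erw [← one_def, one_smul]
  have hinv : ∀ (g : DihedralGroup 0), ∀ y ∈ F, g • y ∈ F := by
    rintro ((m : ℤ) | (m : ℤ)) y hy
    · show (r n : DihedralGroup 0) • ((r m : DihedralGroup 0) • y) = (r m : DihedralGroup 0) • y
      rw [smul_smul]; erw [r_mul_r'']; rw [add_comm, ← r_mul_r'', ← smul_smul, hy]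
    · show (r n : DihedralGroup 0) • ((sr m : DihedralGroup 0) • y) = (sr m : DihedralGroup 0) • y
      rw [smul_smul]; erw [r_mul_sr'']
      conv_rhs => rw [← hneg y hy, smul_smul]; erw [sr_mul_r'']
      ring_nf
  have hFclosed : IsClosed F := isClosed_eq (continuous_const_smul _) continuous_id
  have horb : MulAction.orbit (DihedralGroup 0) x ⊆ F := by
    rintro _ ⟨g, rfl⟩; exact hinv g x hfix
  have hFuniv : ∀ y : X, y ∈ F := by
    intro y
    have h1 : closure (MulAction.orbit (DihedralGroup 0) x) ⊆ F := by
      rw [← hFclosed.closure_eq]; exact closure_mono horb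
    exact h1 ((hmin x).closure_eq ▸ Set.mem_univ y)
  obtain ⟨c, hcpos, hcn⟩ : ∃ c : ℤ, 0 < c ∧ (c = n ∨ c = -n) := by
    rcases lt_or_gt_of_ne hn with h | h
    · exact ⟨-n, by omega, Or.inr rfl⟩
    · exact ⟨n, h, Or.inl rfl⟩
  have hstab : ∀ y : X, (r c : DihedralGroup 0) • y = y := by
    intro y
    rcases hcn with rfl | rfl
    · exact hFuniv y
    · exact hneg y (hFuniv y)
  have hmul : ∀ (y : X) (t : ℤ), (r (c * t) : DihedralGroup 0) • y = y := by
    intro y t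
    have h1 : (r c : DihedralGroup 0) ∈ MulAction.stabilizer (DihedralGroup 0) y := hstab y
    have h2 := zpow_mem h1 t
    rw [r_zpow'] at h2
    exact h2
  set S : Set X := Set.range (fun p : Fin c.toNat × Bool =>
    (if p.2 then (sr (p.1.val : ℤ) : DihedralGroup 0) else r (p.1.val : ℤ)) • x) with hS
  have hSfin : S.Finite := Set.finite_range _
  have hr_mem : ∀ m : ℤ, (r m : DihedralGroup 0) • x ∈ S := by
    intro m
    set q : ℤ := m % c with hq
    have hq0 : 0 ≤ q := Int.emod_nonneg m (ne_of_gt hcpos)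
    have hqlt : q < c := Int.emod_lt_of_pos m hcpos
    refine ⟨(⟨q.toNat, by omega⟩, false), ?_⟩
    simp only [if_neg Bool.false_ne_true]
    show (r ((q.toNat : ℤ)) : DihedralGroup 0) • x = (@DihedralGroup.r 0 m) • x
    rw [Int.toNat_of_nonneg hq0]
    have h5 : (r m : DihedralGroup 0) • x = (r q : DihedralGroup 0) • ((r (c * (m / c)) : DihedralGroup 0) • x) := by
      rw [smul_smul, r_mul_r'']
      congr 1
      rw [hq, Int.emod_add_mul_ediv m c]
    rw [h5, hmul]
  have hsr_mem : ∀ m : ℤ, (sr m : DihedralGroup 0) • x ∈ S := by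
    intro m
    set q : ℤ := m % c with hq
    have hq0 : 0 ≤ q := Int.emod_nonneg m (ne_of_gt hcpos)
    have hqlt : q < c := Int.emod_lt_of_pos m hcpos
    refine ⟨(⟨q.toNat, by omega⟩, true), ?_⟩
    simp only [if_true]
    show (sr ((q.toNat : ℤ)) : DihedralGroup 0) • x = (@DihedralGroup.sr 0 m) • x
    rw [Int.toNat_of_nonneg hq0]
    have h5 : (sr m : DihedralGroup 0) • x = (sr q : DihedralGroup 0) • ((r (c * (m / c)) : DihedralGroup 0) • x) := by
      rw [smul_smul, sr_mul_r'']
      congr 1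
      rw [hq, Int.emod_add_mul_ediv m c]
    rw [h5, hmul]
  have horbS : MulAction.orbit (DihedralGroup 0) x ⊆ S := by
    rintro _ ⟨(m | m), rfl⟩
    · exact hr_mem m
    · exact hsr_mem m
  have hSuniv : S = Set.univ := by
    rw [← hSfin.isClosed.closure_eq]
    exact ((hmin x).mono horbS).closure_eq
  exact Set.infinite_univ (hSuniv ▸ hSfin)

/-- For a minimal action of the infinite dihedral group `D_∞ = ⟨s, t ∣ t² = 1, tsts = 1⟩`
(realized as `DihedralGroup 0`, with `s = r 1` and `t = sr 0`) by homeomorphisms on an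
infinite compact Hausdorff space `X`: for every `x ∈ X`, either `Stab(x) = {e}` or
`Stab(x) = {e, sⁿt}` for some `n ∈ ℤ`. In particular every stabilizer has order at most 2. -/
theorem dihedral_minimal_stabilizer_eq_bot_or_pair
    {X : Type*} [TopologicalSpace X] [CompactSpace X] [T2Space X] [Infinite X]
    [MulAction (DihedralGroup 0) X] [ContinuousConstSMul (DihedralGroup 0) X]
    (hmin : ∀ x : X, Dense (MulAction.orbit (DihedralGroup 0) x)) (x : X) :
    (MulAction.stabilizer (DihedralGroup 0) x = ⊥ ∨
      ∃ n : ℤ, (MulAction.stabilizer (DihedralGroup 0) x : Set (DihedralGroup 0)) =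
        {1, (DihedralGroup.r 1 : DihedralGroup 0) ^ n * DihedralGroup.sr 0}) ∧
      Nat.card (MulAction.stabilizer (DihedralGroup 0) x) ≤ 2 := by
  classical
  set H := MulAction.stabilizer (DihedralGroup 0) x with hH
  have hr : ∀ m : ℤ, (r m : DihedralGroup 0) ∈ H → m = 0 := by
    intro m hm
    by_contra h0
    exact no_rot hmin x m h0 hm
  by_cases hb : H = ⊥
  · refine ⟨Or.inl hb, ?_⟩
    rw [hb, Subgroup.card_bot]
    omega
  · obtain ⟨⟨g, hg⟩, hg1'⟩ := (Subgroup.ne_bot_iff_exists_ne_one (H := H)).mp hb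
    have hg1 : g ≠ 1 := fun h => hg1' (Subtype.ext h)
    have hsr_unique : ∀ a b : ℤ, (sr a : DihedralGroup 0) ∈ H →
        (sr b : DihedralGroup 0) ∈ H → b = a := by
      intro a b ha hb'
      have h2 : (sr a : DihedralGroup 0)⁻¹ * sr b ∈ H := mul_mem (inv_mem ha) hb'
      rw [sr_inv', sr_mul_sr''] at h2
      have := hr _ h2
      omega
    have key : ∀ a : ℤ, (sr a : DihedralGroup 0) ∈ H →
        (H : Set (DihedralGroup 0)) = {1, (r 1 : DihedralGroup 0) ^ (-a) * sr 0} := by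
      intro a ha
      have hval : (r 1 : DihedralGroup 0) ^ (-a) * sr 0 = sr a := by
        rw [r_one_zpow']; exact (r_mul_sr'' (-a) 0).trans (by ring_nf)
      rw [hval]
      ext g
      simp only [Set.mem_insert_iff, Set.mem_singleton_iff, SetLike.mem_coe]
      constructor
      · rintro hgH
        obtain (m | b) := g
        · left
          have h0 : m = (0 : ℤ) := hr m hgH
          rw [one_def]
          exact congrArg (fun i : ℤ => (r i : DihedralGroup 0)) h0
        · right
          exact congrArg (fun i : ℤ => (sr i : DihedralGroup 0)) (hsr_unique a b ha hgH)
      · rintro (rfl | rfl)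
        · exact one_mem H
        · exact ha
    obtain (m | a) := g
    · exact absurd (by
        rw [one_def]
        exact congrArg (fun i : ℤ => (r i : DihedralGroup 0)) (hr m hg)) hg1
    · have hset := key a hg
      refine ⟨Or.inr ⟨-a, hset⟩, ?_⟩
      have hcard : Nat.card H = (H : Set (DihedralGroup 0)).ncard :=
        Nat.card_coe_set_eq _
      rw [hcard, hset]
      refine le_trans (Set.ncard_insert_le _ _) ?_
      rw [Set.ncard_singleton]
end

section
/- Let the infinite dihedral group D_∞ act by homeomorphisms on an infinite compact Hausdorff topological space X such that the action is minimal. Then for every x ∈ X and every finite subset F ⊆ D_∞ there exists k ∈ ℤ such that the point y = sᵏ·x satisfies g·y ≠ g'·y for any two distinct g, g' ∈ F; equivalently, Stab(y) ∩ F⁻¹F ⊆ {e} where F⁻¹F = {g⁻¹g' : g, g' ∈ F}. -/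
open Pointwise

open DihedralGroup

private def R (i : ℤ) : DihedralGroup 0 := r i
private def SR (i : ℤ) : DihedralGroup 0 := sr i

private lemma R_mul_R (i j : ℤ) : R i * R j = R (i + j) := rfl
private lemma SR_mul_R (i j : ℤ) : SR i * R j = SR (i + j) := rfl
private lemma R_mul_SR (i j : ℤ) : R i * SR j = SR (j - i) := rfl
private lemma SR_mul_SR (i j : ℤ) : SR i * SR j = R (j - i) := rfl
private lemma R_zero : R 0 = 1 := rfl

private lemma R_one_zpow (k : ℤ) : (R 1)^k = R k := by
  show (r 1 : DihedralGroup 0)^k = _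
  cases k with
  | ofNat n => simp [zpow_natCast, r_one_pow]; rfl
  | negSucc n => simp [zpow_negSucc, r_one_pow]; show r _ = r _; exact congrArg r (show (-1 + -(n:ℤ)) = Int.negSucc n by omega)

private lemma R_zpow (a q : ℤ) : (R a)^q = R (a * q) := by
  rw [← R_one_zpow a, ← zpow_mul, R_one_zpow]

private lemma R_cases (g : DihedralGroup 0) : (∃ i : ℤ, g = R i) ∨ (∃ i : ℤ, g = SR i) := by
  cases g with
  | r i => exact Or.inl ⟨i, rfl⟩
  | sr i => exact Or.inr ⟨i, rfl⟩

-- nontrivial rotations fix no point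
private lemma aux_rot {X : Type*} [TopologicalSpace X] [T1Space X] [Infinite X]
    [MulAction (DihedralGroup 0) X]
    (hmin : ∀ x : X, Dense (MulAction.orbit (DihedralGroup 0) x))
    (d : ℤ) (hd0 : d ≠ 0) (z : X) : R d • z ≠ z := by
  intro h
  set e : ℤ := |d| with he
  have epos : (0:ℤ) < e := abs_pos.mpr hd0
  have hez : R e • z = z := by
    rcases abs_choice d with h1 | h1
    · rw [he, h1]; exact h
    · have : R (-d) • (R d • z) = R (-d) • z := by rw [h]
      rw [smul_smul, R_mul_R, neg_add_cancel, R_zero, one_smul] at this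
      rw [he, h1]; exact this.symm
  have key : ∀ q : ℤ, R (e * q) • z = z := by
    intro q
    have h2 : (R e) ^ q • z = z := by
      induction q using Int.induction_on with
      | zero => simp
      | succ i ih => rw [zpow_add, zpow_one, mul_smul, hez, ih]
      | pred i ih => rw [sub_eq_add_neg, zpow_add, mul_smul]
                     rw [show ((R e)^(-1:ℤ)) • z = z by
                       rw [zpow_neg, zpow_one, inv_smul_eq_iff, hez], ih]
    rwa [R_zpow] at h2
  have hfin : (MulAction.orbit (DihedralGroup 0) z).Finite := by
    have hsub : MulAction.orbit (DihedralGroup 0) z ⊆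
        ((fun i : ℤ => R i • z) '' (Set.Icc 0 e)) ∪
        ((fun i : ℤ => SR i • z) '' (Set.Icc 0 e)) := by
      rintro _ ⟨g, rfl⟩
      have hmem : ∀ i : ℤ, i % e ∈ Set.Icc 0 e :=
        fun i => ⟨Int.emod_nonneg i (ne_of_gt epos), le_of_lt (Int.emod_lt_of_pos i epos)⟩
      rcases R_cases g with ⟨i, rfl⟩ | ⟨i, rfl⟩
      · left
        refine ⟨i % e, hmem i, ?_⟩
        have : R (i % e) • (R (e * (i / e)) • z) = R i • z := by
          rw [smul_smul, R_mul_R, Int.emod_add_mul_ediv]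
        rw [key] at this
        exact this
      · right
        refine ⟨i % e, hmem i, ?_⟩
        have : SR (i % e) • (R (e * (i / e)) • z) = SR i • z := by
          rw [smul_smul, SR_mul_R, Int.emod_add_mul_ediv]
        rw [key] at this
        exact this
    exact Set.Finite.subset (((Set.finite_Icc 0 e).image _).union
      ((Set.finite_Icc 0 e).image _)) hsub
  have : (Set.univ : Set X).Finite := by
    rw [← (hmin z).closure_eq, hfin.isClosed.closure_eq]; exact hfin
  exact Set.infinite_univ this

private def dpart : DihedralGroup 0 → ℤ
  | DihedralGroup.r i => i
  | DihedralGroup.sr i => i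

private lemma dpart_SR (m : ℤ) : dpart (SR m) = m := rfl


/-- For a minimal action of the infinite dihedral group `D_∞` (realized as `DihedralGroup 0`,
with `s = r 1`) by homeomorphisms on an infinite compact Hausdorff space `X`: for every
`x ∈ X` and every finite `F ⊆ D_∞` there is `k ∈ ℤ` such that the point `y = sᵏ • x`
satisfies `g • y ≠ g' • y` for all distinct `g, g' ∈ F`; equivalently
`Stab(y) ∩ F⁻¹F ⊆ {e}`. -/
theorem dihedral_minimal_exists_translate_with_free_point
    {X : Type*} [TopologicalSpace X] [CompactSpace X] [T2Space X] [Infinite X]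
    [MulAction (DihedralGroup 0) X] [ContinuousConstSMul (DihedralGroup 0) X]
    (hmin : ∀ x : X, Dense (MulAction.orbit (DihedralGroup 0) x))
    (x : X) (F : Finset (DihedralGroup 0)) :
    ∃ k : ℤ,
      (∀ g ∈ F, ∀ g' ∈ F, g ≠ g' →
        g • (((DihedralGroup.r 1 : DihedralGroup 0) ^ k) • x) ≠
          g' • (((DihedralGroup.r 1 : DihedralGroup 0) ^ k) • x)) ∧
      (MulAction.stabilizer (DihedralGroup 0)
            (((DihedralGroup.r 1 : DihedralGroup 0) ^ k) • x) : Set (DihedralGroup 0)) ∩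
          ((F : Set (DihedralGroup 0))⁻¹ * (F : Set (DihedralGroup 0))) ⊆ {1} := by
  classical
  have hrot : ∀ (m : ℤ), m ≠ 0 → ∀ z : X, R m • z ≠ z := fun m hm z => aux_rot hmin m hm z
  have huniq : ∀ a b : ℤ, SR a • x = x → SR b • x = x → a = b := by
    intro a b ha hb
    by_contra hne
    have : R (b - a) • x = x := by rw [← SR_mul_SR, mul_smul, hb, ha]
    exact hrot (b - a) (sub_ne_zero.mpr (fun h => hne h.symm)) x this
  have hrefl_shift : ∀ (m k : ℤ), SR m • (R k • x) = R k • x → SR (m + 2*k) • x = x := by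
    intro m k hmk
    rw [smul_smul, SR_mul_R] at hmk
    have h2 := congrArg (fun w => R (-k) • w) hmk
    simp only [smul_smul, R_mul_SR, R_mul_R, neg_add_cancel, R_zero, one_smul] at h2
    rw [show m + 2*k = m + k - -k by ring]
    exact h2
  have hrot_shift : ∀ (m k : ℤ), R m • (R k • x) = R k • x → R m • x = x := by
    intro m k hmk
    rw [smul_smul, R_mul_R, add_comm m k, ← R_mul_R, mul_smul, smul_left_cancel_iff] at hmk
    exact hmk
  set T : Finset ℤ := (F ×ˢ F).image (fun p => dpart (p.1⁻¹ * p.2)) with hT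
  obtain ⟨k, hk⟩ : ∃ k : ℤ, ∀ m ∈ T, ¬ (SR (m + 2*k) • x = x) := by
    by_cases hb : ∃ b : ℤ, SR b • x = x
    · obtain ⟨b₀, hb₀⟩ := hb
      set T2 : Finset ℤ := T.image (fun m => b₀ - m) with hT2
      set N : ℕ := T2.sup (fun t => t.natAbs) with hN
      refine ⟨(N : ℤ) + 1, ?_⟩
      intro m hm hcon
      have heq : m + 2*((N:ℤ)+1) = b₀ := huniq _ _ hcon hb₀
      have hmem : b₀ - m ∈ T2 := Finset.mem_image_of_mem _ hm
      have hle : (b₀ - m).natAbs ≤ N := Finset.le_sup (f := fun t => t.natAbs) hmem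
      omega
    · exact ⟨0, fun m _ hcon => hb ⟨m + 2*0, hcon⟩⟩
  have hstab : (MulAction.stabilizer (DihedralGroup 0) (R k • x) : Set (DihedralGroup 0)) ∩
      ((F : Set (DihedralGroup 0))⁻¹ * (F : Set (DihedralGroup 0))) ⊆ {1} := by
    rintro h ⟨hh1, hh2⟩
    have hsmul : h • (R k • x) = R k • x := by
      rw [SetLike.mem_coe, MulAction.mem_stabilizer_iff] at hh1
      exact hh1
    rcases R_cases h with ⟨m, rfl⟩ | ⟨m, rfl⟩
    · have hm0 : R m • x = x := hrot_shift m k hsmul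
      have : m = 0 := by
        by_contra hne
        exact hrot m hne x hm0
      simp [this, R_zero]
    · exfalso
      have hshift := hrefl_shift m k hsmul
      have hmT : m ∈ T := by
        rw [Set.mem_mul] at hh2
        obtain ⟨a, ha, c, hc, hac⟩ := hh2
        rw [hT]
        refine Finset.mem_image.mpr ⟨(a⁻¹, c), ?_, ?_⟩
        · exact Finset.mem_product.mpr ⟨Set.mem_inv.mp ha, hc⟩
        · simp only [inv_inv]
          rw [hac, dpart_SR]
      exact hk m hmT hshift
  refine ⟨k, ?_, ?_⟩
  · rw [show (DihedralGroup.r 1 : DihedralGroup 0) ^ k = R k from R_one_zpow k]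
    intro g hg g' hg' hne heq
    have h1 : g⁻¹ * g' ∈ MulAction.stabilizer (DihedralGroup 0) (R k • x) := by
      rw [MulAction.mem_stabilizer_iff, mul_smul, ← heq, inv_smul_smul]
    have h2 : g⁻¹ * g' ∈ (F : Set (DihedralGroup 0))⁻¹ * (F : Set (DihedralGroup 0)) :=
      Set.mul_mem_mul (Set.inv_mem_inv.mpr hg) hg'
    have h3 : g⁻¹ * g' = 1 := hstab ⟨h1, h2⟩
    exact hne (by rwa [inv_mul_eq_one] at h3)
  · rw [show (DihedralGroup.r 1 : DihedralGroup 0) ^ k = R k from R_one_zpow k]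
    exact hstab
end

section
/- Let Γ be a group acting on a Hausdorff topological space X such that each g ∈ Γ acts as a continuous map, and for k ≥ 1 let X_k = {x ∈ X : the orbit Γ·x has exactly k elements}. Then X_k is open in the closed set X_{≤k} = {x ∈ X : Γ·x is finite with at most k elements}; in particular X_k is locally closed in X, and if X is in addition locally compact then X_k is a locally compact Hausdorff space in its subspace topology. -/
section Aux

variable {Γ X : Type*} [Group Γ] [TopologicalSpace X] [T2Space X]
    [MulAction Γ X] [ContinuousConstSMul Γ X]

/-- The set of points admitting `n` group elements moving them to pairwise distinct points
is open. -/
lemma aux_isOpen_W (n : ℕ) :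
    IsOpen {x : X | ∃ g : Fin n → Γ, Function.Injective fun i => g i • x} := by
  have : {x : X | ∃ g : Fin n → Γ, Function.Injective fun i => g i • x} =
      ⋃ g : Fin n → Γ, ⋂ i, ⋂ j, {x : X | g i • x = g j • x → i = j} := by
    ext x
    simp only [Set.mem_setOf_eq, Set.mem_iUnion, Set.mem_iInter, Function.Injective]
  rw [this]
  refine isOpen_iUnion fun g => isOpen_iInter_of_finite fun i =>
    isOpen_iInter_of_finite fun j => ?_
  by_cases h : i = j
  · simp only [h]
    convert isOpen_univ
    ext x; simp
  · have : {x : X | g i • x = g j • x → i = j} = {x : X | g i • x ≠ g j • x} := by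
      ext x; simp [h]
    rw [this]
    exact isOpen_ne_fun (continuous_const_smul _) (continuous_const_smul _)

/-- If the orbit contains a finite subset of cardinality `n`, then there are `n` group
elements moving `x` to pairwise distinct points. -/
lemma aux_exists_of_subset {x : X} {t : Set X} {n : ℕ} (ht : t ⊆ MulAction.orbit Γ x)
    (htfin : t.Finite) (htcard : t.ncard = n) :
    ∃ g : Fin n → Γ, Function.Injective fun i => g i • x := by
  have : Finite t := htfin
  have hcard : Nat.card t = n := by rw [Nat.card_coe_set_eq, htcard]
  let e : t ≃ Fin n := Finite.equivFinOfCardEq hcard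
  have hmem : ∀ i : Fin n, ((e.symm i : X) ∈ MulAction.orbit Γ x) := fun i =>
    ht (e.symm i).2
  choose g hg using fun i => hmem i
  refine ⟨g, fun i j hij => ?_⟩
  have : (e.symm i : X) = (e.symm j : X) := by
    rw [← hg i, ← hg j]; exact hij
  have := Subtype.coe_injective this
  simpa using congrArg e this

/-- Conversely, `n` group elements moving `x` to pairwise distinct points witness that a
finite orbit has cardinality at least `n`. -/
lemma aux_le_ncard {x : X} {n : ℕ} (hfin : (MulAction.orbit Γ x).Finite)
    (h : ∃ g : Fin n → Γ, Function.Injective fun i => g i • x) :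
    n ≤ (MulAction.orbit Γ x).ncard := by
  obtain ⟨g, hg⟩ := h
  have hsub : Set.range (fun i => g i • x) ⊆ MulAction.orbit Γ x := by
    rintro _ ⟨i, rfl⟩; exact MulAction.mem_orbit x (g i)
  have hcard : (Set.range fun i => g i • x).ncard = n := by
    rw [← Nat.card_coe_set_eq, Nat.card_range_of_injective hg, Nat.card_eq_fintype_card,
      Fintype.card_fin]
  rw [← hcard]
  exact Set.ncard_le_ncard hsub hfin

end Aux

/-- Let a group `Γ` act on a Hausdorff space `X` with each `g ∈ Γ` acting continuously,
and for `k ≥ 1` let `X_k` be the set of points whose orbit has exactly `k` elements.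
Then `X_k` is open in the closed set `X_{≤k}` (i.e. `X_k = V ∩ X_{≤k}` for some open
`V ⊆ X`); in particular `X_k` is locally closed in `X`, and if `X` is moreover locally
compact then `X_k` is a locally compact Hausdorff space in the subspace topology. -/
theorem points_with_orbit_card_eq_locallyClosed
    {Γ X : Type*} [Group Γ] [TopologicalSpace X] [T2Space X]
    [MulAction Γ X] [ContinuousConstSMul Γ X] (k : ℕ) (hk : 1 ≤ k) :
    (∃ V : Set X, IsOpen V ∧
        {x : X | (MulAction.orbit Γ x).Finite ∧ (MulAction.orbit Γ x).ncard = k} =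
          V ∩ {x : X | (MulAction.orbit Γ x).Finite ∧ (MulAction.orbit Γ x).ncard ≤ k}) ∧
      IsLocallyClosed
        {x : X | (MulAction.orbit Γ x).Finite ∧ (MulAction.orbit Γ x).ncard = k} ∧
      (LocallyCompactSpace X →
        (LocallyCompactSpace
            {x : X // (MulAction.orbit Γ x).Finite ∧ (MulAction.orbit Γ x).ncard = k} ∧
          T2Space
            {x : X // (MulAction.orbit Γ x).Finite ∧ (MulAction.orbit Γ x).ncard = k})) := by
  set V : Set X := {x : X | ∃ g : Fin k → Γ, Function.Injective fun i => g i • x} with hV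
  have hVopen : IsOpen V := aux_isOpen_W k
  -- the closed set `X_{≤ k}`
  have hclosed : IsClosed {x : X | (MulAction.orbit Γ x).Finite ∧
      (MulAction.orbit Γ x).ncard ≤ k} := by
    rw [← isOpen_compl_iff]
    have : {x : X | (MulAction.orbit Γ x).Finite ∧ (MulAction.orbit Γ x).ncard ≤ k}ᶜ =
        {x : X | ∃ g : Fin (k + 1) → Γ, Function.Injective fun i => g i • x} := by
      ext x
      simp only [Set.mem_compl_iff, Set.mem_setOf_eq, not_and, not_le]
      constructor
      · intro h
        by_cases hfin : (MulAction.orbit Γ x).Finite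
        · obtain ⟨t, hts, htcard⟩ := Set.exists_subset_card_eq (h hfin)
          exact aux_exists_of_subset hts (hfin.subset hts) htcard
        · obtain ⟨t, hts, htfin, htcard⟩ :=
            Set.Infinite.exists_subset_ncard_eq hfin (k + 1)
          exact aux_exists_of_subset hts htfin htcard
      · intro h hfin
        exact aux_le_ncard hfin h
    rw [this]
    exact aux_isOpen_W (k + 1)
  -- the key set equality
  have hkey : {x : X | (MulAction.orbit Γ x).Finite ∧ (MulAction.orbit Γ x).ncard = k} =
      V ∩ {x : X | (MulAction.orbit Γ x).Finite ∧ (MulAction.orbit Γ x).ncard ≤ k} := by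
    ext x
    simp only [Set.mem_inter_iff, Set.mem_setOf_eq, hV]
    constructor
    · rintro ⟨hfin, hcard⟩
      refine ⟨?_, hfin, le_of_eq hcard⟩
      obtain ⟨t, hts, htcard⟩ := Set.exists_subset_card_eq (le_of_eq hcard.symm)
      exact aux_exists_of_subset hts (hfin.subset hts) htcard
    · rintro ⟨hg, hfin, hle⟩
      exact ⟨hfin, le_antisymm hle (aux_le_ncard hfin hg)⟩
  have hlc : IsLocallyClosed
      {x : X | (MulAction.orbit Γ x).Finite ∧ (MulAction.orbit Γ x).ncard = k} :=
    ⟨V, _, hVopen, hclosed, hkey⟩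
  exact ⟨⟨V, hVopen, hkey⟩, hlc, fun _ => ⟨hlc.locallyCompactSpace, inferInstance⟩⟩
end

section
/- Let Γ be a group acting on a Hausdorff topological space X such that each g ∈ Γ acts as a continuous map, let k ≥ 1, and let X_k = {x ∈ X : the orbit Γ·x has exactly k elements}. Then for any x, y ∈ X_k with Γ·x ≠ Γ·y there exist Γ-invariant open subsets U, V ⊆ X with x ∈ U, y ∈ V and U ∩ V ∩ X_k = ∅. Consequently, the image of X_k in the orbit space X/Γ (equipped with the quotient topology) is Hausdorff in its subspace topology. -/
open Pointwise

/-- Auxiliary separation lemma: two points with distinct finite orbits of the same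
cardinality `k` can be separated by invariant open sets whose intersection misses
the set of points with orbit of cardinality `k`. -/
lemma aux_separation
    {Γ X : Type*} [Group Γ] [TopologicalSpace X] [T2Space X]
    [MulAction Γ X] [ContinuousConstSMul Γ X] (k : ℕ) (hk : 1 ≤ k)
    (x y : X)
    (hxf : (MulAction.orbit Γ x).Finite) (hxc : (MulAction.orbit Γ x).ncard = k)
    (hyf : (MulAction.orbit Γ y).Finite) (hyc : (MulAction.orbit Γ y).ncard = k)
    (hne : MulAction.orbit Γ x ≠ MulAction.orbit Γ y) :
    ∃ U V : Set X, IsOpen U ∧ IsOpen V ∧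
      (∀ g : Γ, g • U = U) ∧ (∀ g : Γ, g • V = V) ∧ x ∈ U ∧ y ∈ V ∧
      U ∩ V ∩ {z : X | (MulAction.orbit Γ z).Finite ∧ (MulAction.orbit Γ z).ncard = k}
        = ∅ := by
  classical
  set A := MulAction.orbit Γ x with hA
  set B := MulAction.orbit Γ y with hB
  have hAB : Disjoint A B := by
    rw [Set.disjoint_left]
    intro z hzA hzB
    exact hne ((MulAction.orbit_eq_iff.mpr hzA).symm.trans (MulAction.orbit_eq_iff.mpr hzB))
  obtain ⟨O, hO, hOdisj⟩ := (hxf.union hyf).t2_separation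
  have hchooseA : ∀ p : X, ∃ g : Γ, p ∈ A → g • x = p := by
    intro p
    by_cases h : p ∈ A
    · obtain ⟨g, hg⟩ := h; exact ⟨g, fun _ => hg⟩
    · exact ⟨1, fun h' => absurd h' h⟩
  have hchooseB : ∀ p : X, ∃ g : Γ, p ∈ B → g • y = p := by
    intro p
    by_cases h : p ∈ B
    · obtain ⟨g, hg⟩ := h; exact ⟨g, fun _ => hg⟩
    · exact ⟨1, fun h' => absurd h' h⟩
  choose σ hσ using hchooseA
  choose τ hτ using hchooseB
  set U₀ : Set X := ⋂ p ∈ A, (fun z => σ p • z) ⁻¹' O p with hU₀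
  set V₀ : Set X := ⋂ p ∈ B, (fun z => τ p • z) ⁻¹' O p with hV₀
  have hU₀open : IsOpen U₀ :=
    hxf.isOpen_biInter fun p _ => (hO p).2.preimage (continuous_const_smul _)
  have hV₀open : IsOpen V₀ :=
    hyf.isOpen_biInter fun p _ => (hO p).2.preimage (continuous_const_smul _)
  have hxU₀ : x ∈ U₀ := by
    refine Set.mem_iInter₂.mpr fun p hp => ?_
    show σ p • x ∈ O p
    rw [hσ p hp]; exact (hO p).1
  have hyV₀ : y ∈ V₀ := by
    refine Set.mem_iInter₂.mpr fun p hp => ?_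
    show τ p • y ∈ O p
    rw [hτ p hp]; exact (hO p).1
  refine ⟨⋃ g : Γ, g • U₀, ⋃ g : Γ, g • V₀,
    isOpen_iUnion fun g => hU₀open.smul g, isOpen_iUnion fun g => hV₀open.smul g,
    ?_, ?_, ?_, ?_, ?_⟩
  · intro g
    ext z
    simp only [Set.mem_smul_set_iff_inv_smul_mem, Set.mem_iUnion]
    constructor
    · rintro ⟨h, hh⟩
      exact ⟨g * h, by simpa [mul_smul] using hh⟩
    · rintro ⟨h, hh⟩
      exact ⟨g⁻¹ * h, by simpa [mul_smul] using hh⟩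
  · intro g
    ext z
    simp only [Set.mem_smul_set_iff_inv_smul_mem, Set.mem_iUnion]
    constructor
    · rintro ⟨h, hh⟩
      exact ⟨g * h, by simpa [mul_smul] using hh⟩
    · rintro ⟨h, hh⟩
      exact ⟨g⁻¹ * h, by simpa [mul_smul] using hh⟩
  · exact Set.mem_iUnion.mpr ⟨1, by simpa using hxU₀⟩
  · exact Set.mem_iUnion.mpr ⟨1, by simpa using hyV₀⟩
  · -- the key disjointness claim
    have key : ∀ (s : Set X) (ρ : X → Γ),
        s ⊆ A ∪ B → s.ncard = k →
        ∀ z, (∃ g : Γ, z ∈ g • (⋂ p ∈ s, (fun t => ρ p • t) ⁻¹' O p)) →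
        (MulAction.orbit Γ z).Finite → (MulAction.orbit Γ z).ncard = k →
        MulAction.orbit Γ z ⊆ ⋃ p ∈ s, O p := by
      intro s ρ hss hsc z hz hzf hzc
      obtain ⟨g, hg⟩ := hz
      rw [Set.mem_smul_set_iff_inv_smul_mem] at hg
      set u := g⁻¹ • z with hu
      have horb : MulAction.orbit Γ u = MulAction.orbit Γ z := MulAction.orbit_smul g⁻¹ z
      have hmem : ∀ p ∈ s, ρ p • u ∈ O p := fun p hp => Set.mem_iInter₂.mp hg p hp
      have hinj : Set.InjOn (fun p => ρ p • u) s := by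
        intro p hp q hq hpq
        by_contra hne'
        have hpq' : ρ p • u = ρ q • u := hpq
        have h2 := hmem q hq
        rw [← hpq'] at h2
        exact Set.disjoint_left.mp (hOdisj (hss hp) (hss hq) hne') (hmem p hp) h2
      set S := (fun p => ρ p • u) '' s with hS
      have hSsub : S ⊆ MulAction.orbit Γ z := by
        rintro _ ⟨p, _, rfl⟩
        exact horb ▸ MulAction.mem_orbit u (ρ p)
      have hScard : S.ncard = k := by
        rw [hS, Set.ncard_image_of_injOn hinj, hsc]
      have hSeq : S = MulAction.orbit Γ z :=
        Set.eq_of_subset_of_ncard_le hSsub (by rw [hzc, hScard]) hzf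
      rw [← hSeq]
      rintro _ ⟨p, hp, rfl⟩
      exact Set.mem_biUnion hp (hmem p hp)
    rw [Set.eq_empty_iff_forall_notMem]
    rintro z ⟨⟨hzU, hzV⟩, hzf, hzc⟩
    have h1 : MulAction.orbit Γ z ⊆ ⋃ p ∈ A, O p :=
      key A σ Set.subset_union_left hxc z (Set.mem_iUnion.mp hzU) hzf hzc
    have h2 : MulAction.orbit Γ z ⊆ ⋃ p ∈ B, O p :=
      key B τ Set.subset_union_right hyc z (Set.mem_iUnion.mp hzV) hzf hzc
    obtain ⟨p, hp, hzp⟩ := Set.mem_iUnion₂.mp (h1 (MulAction.mem_orbit_self z))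
    obtain ⟨q, hq, hzq⟩ := Set.mem_iUnion₂.mp (h2 (MulAction.mem_orbit_self z))
    have hpq : p ≠ q := fun h => Set.disjoint_left.mp hAB hp (h ▸ hq)
    exact Set.disjoint_left.mp
      (hOdisj (Set.mem_union_left _ hp) (Set.mem_union_right _ hq) hpq) hzp hzq

/-- Let a group `Γ` act on a Hausdorff space `X` with each `g ∈ Γ` acting continuously,
let `k ≥ 1`, and let `X_k` be the set of points whose orbit has exactly `k` elements.
Then any two distinct orbits of points of `X_k` can be separated by `Γ`-invariant open
sets whose intersection misses `X_k`; consequently the image of `X_k` in the orbit space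
`X/Γ` (with the quotient topology) is Hausdorff in its subspace topology. -/
theorem image_points_with_orbit_card_eq_t2
    {Γ X : Type*} [Group Γ] [TopologicalSpace X] [T2Space X]
    [MulAction Γ X] [ContinuousConstSMul Γ X] (k : ℕ) (hk : 1 ≤ k) :
    (∀ x y : X,
        (MulAction.orbit Γ x).Finite → (MulAction.orbit Γ x).ncard = k →
        (MulAction.orbit Γ y).Finite → (MulAction.orbit Γ y).ncard = k →
        MulAction.orbit Γ x ≠ MulAction.orbit Γ y →
        ∃ U V : Set X, IsOpen U ∧ IsOpen V ∧
          (∀ g : Γ, g • U = U) ∧ (∀ g : Γ, g • V = V) ∧ x ∈ U ∧ y ∈ V ∧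
          U ∩ V ∩ {z : X | (MulAction.orbit Γ z).Finite ∧ (MulAction.orbit Γ z).ncard = k}
            = ∅) ∧
      T2Space
        ((Quotient.mk (MulAction.orbitRel Γ X) ''
            {z : X | (MulAction.orbit Γ z).Finite ∧ (MulAction.orbit Γ z).ncard = k}) :
          Set (Quotient (MulAction.orbitRel Γ X))) := by
  refine ⟨fun x y hxf hxc hyf hyc hne => aux_separation k hk x y hxf hxc hyf hyc hne, ?_⟩
  refine ⟨?_⟩
  rintro ⟨a, ha⟩ ⟨b, hb⟩ hab
  obtain ⟨x, hx, rfl⟩ := ha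
  obtain ⟨y, hy, rfl⟩ := hb
  have hne : MulAction.orbit Γ x ≠ MulAction.orbit Γ y := by
    intro h
    exact hab (Subtype.ext (Quotient.sound
      (MulAction.orbitRel_apply.mpr (MulAction.orbit_eq_iff.mp h))))
  obtain ⟨U, V, hUo, hVo, hUinv, hVinv, hxU, hyV, hdisj⟩ :=
    aux_separation k hk x y hx.1 hx.2 hy.1 hy.2 hne
  have hsat : ∀ (W : Set X), (∀ g : Γ, g • W = W) →
      Quotient.mk (MulAction.orbitRel Γ X) ⁻¹'
        (Quotient.mk (MulAction.orbitRel Γ X) '' W) = W := by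
    intro W hW
    ext w
    simp only [Set.mem_preimage, Set.mem_image]
    constructor
    · rintro ⟨u, hu, huw⟩
      have h1 : u ∈ MulAction.orbit Γ w :=
        MulAction.orbitRel_apply.mp (Quotient.exact huw)
      obtain ⟨g, hg⟩ := h1
      have hw : w = g⁻¹ • u := by rw [← hg, inv_smul_smul]
      rw [hw, ← hW g⁻¹]
      exact Set.smul_mem_smul_set hu
    · intro hw; exact ⟨w, hw, rfl⟩
  have hopen : ∀ (W : Set X), IsOpen W → (∀ g : Γ, g • W = W) →
      IsOpen (Quotient.mk (MulAction.orbitRel Γ X) '' W) := by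
    intro W hWo hWinv
    refine (isQuotientMap_quotient_mk' (s := MulAction.orbitRel Γ X)).isOpen_preimage.mp ?_
    show IsOpen (Quotient.mk (MulAction.orbitRel Γ X) ⁻¹'
      (Quotient.mk (MulAction.orbitRel Γ X) '' W))
    rw [hsat W hWinv]
    exact hWo
  refine ⟨Subtype.val ⁻¹' (Quotient.mk (MulAction.orbitRel Γ X) '' U),
    Subtype.val ⁻¹' (Quotient.mk (MulAction.orbitRel Γ X) '' V),
    (hopen U hUo hUinv).preimage continuous_subtype_val,
    (hopen V hVo hVinv).preimage continuous_subtype_val,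
    ⟨x, hxU, rfl⟩, ⟨y, hyV, rfl⟩, ?_⟩
  rw [Set.disjoint_left]
  rintro ⟨c, hc⟩ h1 h2
  obtain ⟨w, hwk, hwc⟩ := hc
  obtain ⟨u, hu, huc⟩ := h1
  obtain ⟨v, hv, hvc⟩ := h2
  have hwU : w ∈ U := by
    rw [← hsat U hUinv]
    exact ⟨u, hu, huc.trans hwc.symm⟩
  have hwV : w ∈ V := by
    rw [← hsat V hVinv]
    exact ⟨v, hv, hvc.trans hwc.symm⟩
  exact Set.eq_empty_iff_forall_notMem.mp hdisj w ⟨⟨hwU, hwV⟩, hwk⟩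
end
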